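/- Let B⁽⁰⁾,…,B⁽ᵏ⁾ be operator-collections and μ > 0. For sequences of words 𝐒₀,…,𝐒_k satisfying the connectivity condition S_{i+1} ∩ (S₀∪…∪S_i) ≠ ∅ for all i, and for which the products 𝐒'₀ = 𝐒₀, 𝐒'_i = 𝐒_i𝐒'_{i−1} are all defined, set the weights z(𝐒₀,…,𝐒_k) = |S'_k|^{−(k+1)}·∏_{i=0}^k b⁽ⁱ⁾_{𝐒_i} with b⁽ⁱ⁾_𝐒 = ||B⁽ⁱ⁾_𝐒||·e^{μ|S|}, define z(k) = sup_α Σ_{sequences with α∈S'_k} z(𝐒₀,…,𝐒_k), z_{k,j} = sup_α Σ_{sequences with α∈S_j} z(𝐒₀,…,𝐒_k), and z(−1) = 1. Then for all j = 0,…,k, z_{k,j} ≤ z(j−1)·∏_{t=j}^k ||B⁽ᵗ⁾||_μ. -/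

import Mathlib

open scoped BigOperators
set_option linter.unusedSectionVars false
open Matrix

noncomputable section

namespace QLDPC

open scoped Classical

/-- The four Pauli matrices 1, X, Y, Z. -/
def pauliMat : Fin 4 → Matrix (Fin 2) (Fin 2) ℂ
  | 0 => 1
  | 1 => !![0, 1; 1, 0]
  | 2 => !![0, -Complex.I; Complex.I, 0]
  | 3 => !![1, 0; 0, -1]

variable {Λ E : Type}

/-- Operators on the Hilbert space (ℂ²)^{⊗Λ}. -/
abbrev Op (Λ : Type) [Fintype Λ] [DecidableEq Λ] := Matrix (Λ → Fin 2) (Λ → Fin 2) ℂ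

/-- The operator of a Pauli string `p : Λ → Fin 4`. -/
def pauliOp [Fintype Λ] [DecidableEq Λ] (p : Λ → Fin 4) : Op Λ :=
  fun f g => ∏ x, pauliMat (p x) (f x) (g x)

/-- Qubit support of a Pauli string. -/
def psupp [Fintype Λ] (p : Λ → Fin 4) : Finset Λ :=
  Finset.univ.filter fun x => p x ≠ 0

/-- The operator norm (largest singular value). -/
def opNorm [Fintype Λ] [DecidableEq Λ] (A : Op Λ) : ℝ :=
  ‖Matrix.toEuclideanCLM (𝕜 := ℂ) A‖

/-- Coefficient of the Pauli string `p` in the Pauli-basis expansion of `A`. -/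
def pauliCoeff [Fintype Λ] [DecidableEq Λ] (A : Op Λ) (p : Λ → Fin 4) : ℂ :=
  Matrix.trace (pauliOp p * A) / ((2 : ℂ) ^ Fintype.card Λ)

/-- Qubit support of a general operator, via its Pauli expansion. -/
def opSupp [Fintype Λ] [DecidableEq Λ] (A : Op Λ) : Set Λ :=
  {x | ∃ p : Λ → Fin 4, pauliCoeff A p ≠ 0 ∧ p x ≠ 0}

/-- The data of a family of stabilizer checks: each check is a signed Pauli string. -/
structure Checks (Λ E : Type) where
  str : E → Λ → Fin 4
  sgn : E → Bool

variable [Fintype Λ] [DecidableEq Λ] [Fintype E]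

/-- The operator of check α. -/
def checkOp (K : Checks Λ E) (α : E) : Op Λ :=
  (if K.sgn α then (-1 : ℂ) else 1) • pauliOp (K.str α)

/-- G_α = (1 + C_α)/2. -/
def Gop (K : Checks Λ E) (α : E) : Op Λ := (2⁻¹ : ℂ) • (1 + checkOp K α)

/-- E_α = (1 - C_α)/2. -/
def Eop (K : Checks Λ E) (α : E) : Op Λ := (2⁻¹ : ℂ) • (1 - checkOp K α)

/-- The stabilizer Hamiltonian H₀ = Σ_α E_α. -/
def H0 (K : Checks Λ E) : Op Λ := ∑ α, Eop K α

/-- The stabilizer group 𝒢 generated by the checks (as a submonoid; each check squares to 1). -/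
def stab (K : Checks Λ E) : Submonoid (Op Λ) :=
  Submonoid.closure (Set.range (checkOp K))

/-- All checks pairwise commute (𝒢 abelian). -/
def CommChecks (K : Checks Λ E) : Prop := ∀ α β, Commute (checkOp K α) (checkOp K β)

/-- Check support of a qubit. -/
def suppC (K : Checks Λ E) (x : Λ) : Finset E :=
  Finset.univ.filter fun α => x ∈ psupp (K.str α)

/-- The qubit interaction graph. -/
def qubitGraph (K : Checks Λ E) : SimpleGraph Λ :=
  SimpleGraph.fromRel fun x y => ∃ α, x ∈ psupp (K.str α) ∧ y ∈ psupp (K.str α)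

/-- The check interaction graph. -/
def checkGraph (K : Checks Λ E) : SimpleGraph E :=
  SimpleGraph.fromRel fun α β => (psupp (K.str α) ∩ psupp (K.str β)).Nonempty

/-- `y` lies in the (closed) ball of radius `r` around `x` in the graph `G`. -/
def inBall {V : Type} (G : SimpleGraph V) (x y : V) (r : ℝ) : Prop :=
  G.Reachable x y ∧ (G.dist x y : ℝ) ≤ r

/-- Ball in the qubit graph. -/
def ballQ (K : Checks Λ E) (x : Λ) (r : ℝ) : Finset Λ :=
  Finset.univ.filter fun y => inBall (qubitGraph K) x y r

/-- Ball in the check graph. -/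
def ballC (K : Checks Λ E) (α : E) (r : ℝ) : Finset E :=
  Finset.univ.filter fun β => inBall (checkGraph K) α β r

/-- Ball of radius `r` around a set of checks. -/
def ballCS (K : Checks Λ E) (S : Finset E) (r : ℝ) : Finset E :=
  Finset.univ.filter fun β => ∃ α ∈ S, inBall (checkGraph K) α β r

/-- Growth of balls condition: |B_r| ≤ e^{κ r} on both graphs. -/
def BallGrowth (K : Checks Λ E) (κ : ℝ) : Prop :=
  (∀ (x : Λ) (r : ℝ), ((ballQ K x r).card : ℝ) ≤ Real.exp (κ * r)) ∧
  (∀ (α : E) (r : ℝ), ((ballC K α r).card : ℝ) ≤ Real.exp (κ * r))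

/-- A finite set is connected in a graph if the induced subgraph is connected. -/
def ConnIn {V : Type} (G : SimpleGraph V) (S : Finset V) : Prop :=
  (G.induce (S : Set V)).Connected

/-- Qubit support of a set of checks. -/
def suppSet (K : Checks Λ E) (S : Finset E) : Set Λ :=
  ↑(S.biUnion fun α => psupp (K.str α))

variable [LinearOrder E]

/-- Ordered product of operators over a finite set of check labels. -/
def ordProd (S : Finset E) (f : E → Op Λ) : Op Λ :=
  ((S.sort (· ≤ ·)).map f).prod

/-- The codespace projector P = ∏_α G_α (for commuting checks). -/
def Pmat (K : Checks Λ E) : Op Λ := ordProd Finset.univ (Gop K)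

/-- The code distance: minimal support of a Pauli string p with P p P not proportional to P. -/
def codeDist (K : Checks Λ E) : ℕ :=
  sInf ((fun p => (psupp p).card) ''
    {p : Λ → Fin 4 | ¬∃ cc : ℂ, Pmat K * pauliOp p * Pmat K = cc • Pmat K})

/-- TQO-I: Pauli strings of weight below the code distance commuting with 𝒢 belong to 𝒢. -/
def TQO1 (K : Checks Λ E) : Prop :=
  ∀ p : Λ → Fin 4, (psupp p).card < codeDist K →
    (∀ g ∈ stab K, Commute (pauliOp p) g) → pauliOp p ∈ stab K

/-- TQO-II: group elements locally supported on a small connected check set S are generated by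
checks within distance ℓ|S| of S. -/
def TQO2 (K : Checks Λ E) (ℓ dtil : ℝ) : Prop :=
  ∀ S : Finset E, ConnIn (checkGraph K) S → (S.card : ℝ) < dtil →
    ∀ g ∈ stab K, opSupp (g : Op Λ) ⊆ suppSet K S →
      (g : Op Λ) ∈ Submonoid.closure (checkOp K '' {α | ∃ β ∈ S, inBall (checkGraph K) β α (ℓ * S.card)})

/-! ### Words and operator-collections -/

/-- A word: a quadruple of pairwise disjoint subsets of the checks,
labelled (+, -, excited, ground). -/
structure Word (E : Type) where
  p : Finset E
  m : Finset E
  e : Finset E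
  g : Finset E
  hpm : Disjoint p m
  hpe : Disjoint p e
  hpg : Disjoint p g
  hme : Disjoint m e
  hmg : Disjoint m g
  heg : Disjoint e g

/-- The underlying set of the word. -/
def Word.S [DecidableEq E] (w : Word E) : Finset E := w.p ∪ w.m ∪ w.e ∪ w.g

instance : Fintype (Word E) := by
  classical
  exact Fintype.ofInjective (fun w : Word E => (w.p, w.m, w.e, w.g))
    (by
      rintro ⟨a1, a2, a3, a4, _, _, _, _, _, _⟩ ⟨b1, b2, b3, b4, _, _, _, _, _, _⟩ h
      simp only [Prod.mk.injEq] at h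
      obtain ⟨h1, h2, h3, h4⟩ := h
      subst h1; subst h2; subst h3; subst h4; rfl)

/-- A word is a ghost if all components except the ground one are empty. -/
def IsGhost (w : Word E) : Prop := w.p = ∅ ∧ w.m = ∅ ∧ w.e = ∅

/-- The empty word. -/
def emptyWord (E : Type) : Word E :=
  ⟨∅, ∅, ∅, ∅, by simp, by simp, by simp, by simp, by simp, by simp⟩

/-- Left projector assignment of a word. -/
def leftP (K : Checks Λ E) (w : Word E) (α : E) : Op Λ :=
  if α ∈ w.m ∪ w.g then Gop K α else Eop K α

/-- Right projector assignment of a word. -/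
def rightP (K : Checks Λ E) (w : Word E) (α : E) : Op Λ :=
  if α ∈ w.p ∪ w.g then Gop K α else Eop K α

/-- The class 𝒳_𝐒 of operators compatible with the word 𝐒. -/
def memClass (K : Checks Λ E) (w : Word E) (X : Op Λ) : Prop :=
  ∃ Y : Op Λ,
    (∀ α : E, (opSupp Y ∩ (psupp (K.str α) : Set Λ)).Nonempty → α ∈ w.S) ∧
    X = ordProd w.S (leftP K w) * Y * ordProd w.S (rightP K w)

/-- An operator-collection: a family (O_𝐒)_𝐒 with O_𝐒 ∈ 𝒳_𝐒. -/
def IsColl (K : Checks Λ E) (O : Word E → Op Λ) : Prop :=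
  ∀ w, memClass K w (O w)

/-- The intensive word norm ‖O‖_μ of an operator-collection. -/
def wordNorm (μ : ℝ) (O : Word E → Op Λ) : ℝ :=
  ⨆ α : E, ∑ w : Word E, (if α ∈ w.S then opNorm (O w) * Real.exp (μ * w.S.card) else 0)

/-! ### The multiplication table of words -/

/-- Labels of a check in a word: none, ground, excited, raising, lowering. -/
inductive Lbl | N | G | E | P | M
deriving DecidableEq

/-- The multiplication table of labels; `none` encodes that the product vanishes. -/
def lblMul : Lbl → Lbl → Option Lbl
  | .N, x => some x
  | .G, .N => some .G
  | .G, .G => some .G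
  | .G, .E => none
  | .G, .P => none
  | .G, .M => some .M
  | .E, .N => some .E
  | .E, .G => none
  | .E, .E => some .E
  | .E, .P => some .P
  | .E, .M => none
  | .P, .N => some .P
  | .P, .G => some .P
  | .P, .E => none
  | .P, .P => none
  | .P, .M => some .E
  | .M, .N => some .M
  | .M, .G => none
  | .M, .E => some .M
  | .M, .P => some .G
  | .M, .M => none

/-- The label of a check in a word. -/
def Word.lbl [DecidableEq E] (w : Word E) (α : E) : Lbl :=
  if α ∈ w.p then .P else if α ∈ w.m then .M else if α ∈ w.e then .E
  else if α ∈ w.g then .G else .N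

/-- The product of two words is defined (the corresponding operator product does not vanish
identically by the multiplication table). -/
def MulDef (w' w : Word E) : Prop :=
  ∀ α : E, lblMul (w'.lbl α) (w.lbl α) ≠ none

private lemma disj_aux {f : E → Option Lbl} {a b : Lbl} (hab : a ≠ b) :
    Disjoint (Finset.univ.filter fun α => f α = some a)
      (Finset.univ.filter fun α => f α = some b) := by
  rw [Finset.disjoint_left]
  intro x hx hy
  simp only [Finset.mem_filter] at hx hy
  exact hab (Option.some.inj (hx.2.symm.trans hy.2))

/-- The product word 𝐒'𝐒 (meaningful when `MulDef w' w`). -/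
def wmul (w' w : Word E) : Word E where
  p := Finset.univ.filter fun α => lblMul (w'.lbl α) (w.lbl α) = some .P
  m := Finset.univ.filter fun α => lblMul (w'.lbl α) (w.lbl α) = some .M
  e := Finset.univ.filter fun α => lblMul (w'.lbl α) (w.lbl α) = some .E
  g := Finset.univ.filter fun α => lblMul (w'.lbl α) (w.lbl α) = some .G
  hpm := disj_aux (by decide)
  hpe := disj_aux (by decide)
  hpg := disj_aux (by decide)
  hme := disj_aux (by decide)
  hmg := disj_aux (by decide)
  heg := disj_aux (by decide)

/-- The commutator of two operator-collections. -/
def collComm (O O' : Word E → Op Λ) : Word E → Op Λ := fun w =>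
  ∑ w1 : Word E, ∑ w2 : Word E,
    if MulDef w1 w2 ∧ wmul w1 w2 = w ∧ (w1.S ∩ w2.S).Nonempty
    then O w1 * O' w2 - O' w1 * O w2 else 0

/-- Iterated adjoint action ad_{B_k}⋯ad_{B_1}(B_0) of operator-collections. -/
def chainAd (B : ℕ → Word E → Op Λ) : ℕ → Word E → Op Λ
  | 0 => B 0
  | k + 1 => collComm (B (k + 1)) (chainAd B k)

/-- exp(i ad_A)(B) for operator-collections, defined componentwise. -/
def expAd (A B : Word E → Op Λ) : Word E → Op Λ := fun w =>
  ∑' k : ℕ, ((Complex.I ^ k / (k.factorial : ℂ)) • ((fun C => collComm A C)^[k] B) w)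

/-! ### Sequences of words -/

/-- The running products 𝐒'_i of a sequence of words. -/
def sprime (σ : ℕ → Word E) : ℕ → Word E
  | 0 => σ 0
  | i + 1 => wmul (σ (i + 1)) (sprime σ i)

/-- The running products with ghost words skipped. -/
def sprimeG (σ : ℕ → Word E) : ℕ → Word E
  | 0 => σ 0
  | i + 1 => if IsGhost (σ (i + 1)) then sprimeG σ i else wmul (σ (i + 1)) (sprimeG σ i)

/-- Extend a finite sequence of words by the empty word. -/
def extend {k : ℕ} (σ : Fin (k + 1) → Word E) : ℕ → Word E :=
  fun i => if h : i < k + 1 then σ ⟨i, h⟩ else emptyWord E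

/-! ### Pauli norms -/

/-- Size of a minimal connected set of qubits containing the support of `p`. -/
def mSize (K : Checks Λ E) (p : Λ → Fin 4) : ℕ :=
  sInf {n | ∃ T : Finset Λ, ConnIn (qubitGraph K) T ∧ psupp p ⊆ T ∧ T.card = n}

/-- The intensive Pauli norm of an operator given by Pauli coefficients `c`. -/
def pauliNormC (K : Checks Λ E) (μ : ℝ) (c : (Λ → Fin 4) → ℂ) : ℝ :=
  ⨆ x : Λ, ∑ p : Λ → Fin 4, (if p x ≠ 0 then ‖c p‖ * Real.exp (μ * (mSize K p : ℝ)) else 0)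

/-- The intensive Pauli norm of an operator. -/
def pauliNormOp (K : Checks Λ E) (μ : ℝ) (A : Op Λ) : ℝ :=
  pauliNormC K μ (pauliCoeff A)

/-- Diameter of the qubit graph. -/
def diam (K : Checks Λ E) : ℕ :=
  Finset.univ.sup fun pr : Λ × Λ => (qubitGraph K).dist pr.1 pr.2

/-- The spectral projector of a Hermitian matrix onto the eigenvalues in [-δ, δ]. -/
def spectralProjLE {n : Type} [Fintype n] [DecidableEq n] {A : Matrix n n ℂ}
    (hA : A.IsHermitian) (δ : ℝ) : Matrix n n ℂ :=
  (hA.eigenvectorUnitary : Matrix n n ℂ) *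
    Matrix.diagonal (fun i => if |hA.eigenvalues i| ≤ δ then (1 : ℂ) else 0) *
    star (hA.eigenvectorUnitary : Matrix n n ℂ)


section Stmt13

variable {Λ E : Type} [Fintype Λ] [DecidableEq Λ] [Fintype E] [LinearOrder E]

/-- The connectivity/definedness condition on a sequence of words: each `S_{i+1}` meets
`S₀ ∪ … ∪ S_i` and all running products are defined. -/
def goodSeq (σ : ℕ → Word E) (k : ℕ) : Prop :=
  (∀ i < k, MulDef (σ (i + 1)) (sprime σ i)) ∧
  (∀ i < k, ((σ (i + 1)).S ∩ (Finset.range (i + 1)).biUnion fun j => (σ j).S).Nonempty)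

/-- The weight `z(𝐒₀,…,𝐒_k) = |S'_k|^{−(k+1)} ∏ᵢ bⁱ_{𝐒ᵢ}` with
`bⁱ_𝐒 = ‖Bⁱ_𝐒‖ e^{μ|S|}`. -/
def zw13 (B : ℕ → Word E → Op Λ) (μ : ℝ) (σ : ℕ → Word E) (k : ℕ) : ℝ :=
  (1 / ((sprime σ k).S.card : ℝ)) ^ (k + 1) *
    ∏ i ∈ Finset.range (k + 1), (opNorm (B i (σ i)) * Real.exp (μ * ((σ i).S.card : ℝ)))

/-- `z(k)`: sup over checks `α` of the sum of weights over good sequences with `α ∈ S'_k`. -/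
def z13 (B : ℕ → Word E → Op Λ) (μ : ℝ) (k : ℕ) : ℝ :=
  ⨆ α : E, ∑ σ : Fin (k + 1) → Word E,
    (if goodSeq (extend σ) k ∧ α ∈ (sprime (extend σ) k).S
      then zw13 B μ (extend σ) k else 0)

/-- `z_{k,j}`: same as `z(k)` but anchored by the condition `α ∈ S_j`. -/
def z13kj (B : ℕ → Word E → Op Λ) (μ : ℝ) (k j : ℕ) : ℝ :=
  ⨆ α : E, ∑ σ : Fin (k + 1) → Word E,
    (if goodSeq (extend σ) k ∧ α ∈ (extend σ j).S
      then zw13 B μ (extend σ) k else 0)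


-- ===== auxiliary lemmas =====

instance : Fintype Lbl :=
  ⟨⟨{.N, .G, .E, .P, .M}, by decide⟩, by intro x; cases x <;> decide⟩

lemma mem_S_iff_lbl (w : Word E) (α : E) : α ∈ w.S ↔ w.lbl α ≠ .N := by
  simp only [Word.S, Finset.mem_union, Word.lbl]
  split_ifs with h1 h2 h3 h4 <;> simp_all

lemma wmul_S (w' w : Word E) (h : MulDef w' w) : (wmul w' w).S = w'.S ∪ w.S := by
  ext α
  rw [Finset.mem_union, mem_S_iff_lbl, mem_S_iff_lbl, mem_S_iff_lbl]
  have hα := h α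
  have hmem : (wmul w' w).lbl α =
      (if lblMul (w'.lbl α) (w.lbl α) = some .P then .P
       else if lblMul (w'.lbl α) (w.lbl α) = some .M then .M
       else if lblMul (w'.lbl α) (w.lbl α) = some .E then .E
       else if lblMul (w'.lbl α) (w.lbl α) = some .G then .G else .N) := by
    rw [Word.lbl]; simp only [wmul, Finset.mem_filter, Finset.mem_univ, true_and]
  rw [hmem]
  revert hα
  generalize w'.lbl α = a; generalize w.lbl α = b
  revert a b; decide

lemma sprime_congr (σ σ' : ℕ → Word E) (i : ℕ) (h : ∀ t ≤ i, σ t = σ' t) :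
    sprime σ i = sprime σ' i := by
  induction i with
  | zero => exact h 0 le_rfl
  | succ n ih =>
      simp only [sprime]
      rw [h (n+1) le_rfl, ih fun t ht => h t (ht.trans (Nat.le_succ n))]

lemma sprime_S (σ : ℕ → Word E) (k : ℕ)
    (h : ∀ i < k, MulDef (σ (i + 1)) (sprime σ i)) :
    (sprime σ k).S = (Finset.range (k + 1)).biUnion fun i => (σ i).S := by
  induction k with
  | zero => simp [sprime]
  | succ n ih =>
      rw [Finset.range_add_one, Finset.biUnion_insert]
      rw [show sprime σ (n+1) = wmul (σ (n+1)) (sprime σ n) from rfl,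
        wmul_S _ _ (h n (Nat.lt_succ_self n)),
        ih fun i hi => h i (hi.trans (Nat.lt_succ_self n))]

lemma extend_lt {k : ℕ} (σ : Fin (k + 1) → Word E) (i : ℕ) (hi : i < k + 1) :
    extend σ i = σ ⟨i, hi⟩ := by simp [extend, hi]

lemma extend_snoc_lt {k : ℕ} (τ : Fin (k + 1) → Word E) (w : Word E) (i : ℕ)
    (hi : i < k + 1) :
    extend (Fin.snoc τ w) i = extend τ i := by
  have h2 : i < k + 2 := hi.trans (Nat.lt_succ_self _)
  rw [extend_lt (Fin.snoc τ w) i h2, extend_lt τ i hi]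
  have he : (⟨i, h2⟩ : Fin (k + 2)) = Fin.castSucc ⟨i, hi⟩ := rfl
  rw [he, Fin.snoc_castSucc]

lemma extend_snoc_last {k : ℕ} (τ : Fin (k + 1) → Word E) (w : Word E) :
    extend (Fin.snoc τ w) (k + 1) = w := by
  rw [extend_lt _ (k+1) (Nat.lt_succ_self _)]
  exact Fin.snoc_last _ _

lemma sprime_extend_snoc {k : ℕ} (τ : Fin (k + 1) → Word E) (w : Word E) {i : ℕ}
    (hi : i ≤ k) :
    sprime (extend (Fin.snoc τ w)) i = sprime (extend τ) i :=
  sprime_congr _ _ i fun t ht =>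
    extend_snoc_lt τ w t (Nat.lt_succ_of_le (ht.trans hi))

lemma goodSeq_succ_iff (σ : ℕ → Word E) (k : ℕ) :
    goodSeq σ (k + 1) ↔ goodSeq σ k ∧ MulDef (σ (k + 1)) (sprime σ k) ∧
      ((σ (k + 1)).S ∩ (Finset.range (k + 1)).biUnion fun j => (σ j).S).Nonempty := by
  constructor
  · rintro ⟨h1, h2⟩
    exact ⟨⟨fun i hi => h1 i (hi.trans (Nat.lt_succ_self k)),
      fun i hi => h2 i (hi.trans (Nat.lt_succ_self k))⟩,
      h1 k (Nat.lt_succ_self k), h2 k (Nat.lt_succ_self k)⟩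
  · rintro ⟨⟨h1, h2⟩, h3, h4⟩
    constructor
    · intro i hi
      rcases Nat.lt_succ_iff_lt_or_eq.1 hi with hi | hi
      · exact h1 i hi
      · subst hi; exact h3
    · intro i hi
      rcases Nat.lt_succ_iff_lt_or_eq.1 hi with hi | hi
      · exact h2 i hi
      · subst hi; exact h4

lemma goodSeq_snoc_iff {k : ℕ} (τ : Fin (k + 1) → Word E) (w : Word E) :
    goodSeq (extend (Fin.snoc τ w)) (k + 1) ↔
      goodSeq (extend τ) k ∧ MulDef w (sprime (extend τ) k) ∧
      (w.S ∩ (sprime (extend τ) k).S).Nonempty := by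
  rw [goodSeq_succ_iff]
  have hg : goodSeq (extend (Fin.snoc τ w)) k ↔ goodSeq (extend τ) k := by
    unfold goodSeq
    constructor <;> rintro ⟨h1, h2⟩ <;> refine ⟨fun i hi => ?_, fun i hi => ?_⟩
    · have := h1 i hi
      rwa [extend_snoc_lt τ w (i+1) (Nat.succ_lt_succ hi),
        sprime_extend_snoc τ w (le_of_lt hi)] at this
    · have := h2 i hi
      rwa [extend_snoc_lt τ w (i+1) (Nat.succ_lt_succ hi),
        Finset.biUnion_congr rfl fun j hj => by
          rw [extend_snoc_lt τ w j ((Finset.mem_range.1 hj).trans (Nat.succ_lt_succ hi))]] at this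
    · have := h1 i hi
      rwa [extend_snoc_lt τ w (i+1) (Nat.succ_lt_succ hi),
        sprime_extend_snoc τ w (le_of_lt hi)]
    · have := h2 i hi
      rwa [extend_snoc_lt τ w (i+1) (Nat.succ_lt_succ hi),
        Finset.biUnion_congr rfl fun j hj => by
          rw [extend_snoc_lt τ w j ((Finset.mem_range.1 hj).trans (Nat.succ_lt_succ hi))]]
  rw [hg, extend_snoc_last τ w, sprime_extend_snoc τ w le_rfl]
  constructor
  · rintro ⟨h1, h2, h3⟩
    refine ⟨h1, h2, ?_⟩
    rwa [Finset.biUnion_congr rfl fun j hj => by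
        rw [extend_snoc_lt τ w j (Finset.mem_range.1 hj)],
      ← sprime_S _ k h1.1] at h3
  · rintro ⟨h1, h2, h3⟩
    refine ⟨h1, h2, ?_⟩
    rwa [Finset.biUnion_congr rfl fun j hj => by
        rw [extend_snoc_lt τ w j (Finset.mem_range.1 hj)],
      ← sprime_S _ k h1.1]

lemma opNorm_nonneg' (A : Op Λ) : 0 ≤ opNorm A := norm_nonneg _

lemma bb_nonneg (B : ℕ → Word E → Op Λ) (μ : ℝ) (t : ℕ) (w : Word E) :
    0 ≤ opNorm (B t w) * Real.exp (μ * (w.S.card : ℝ)) :=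
  mul_nonneg (opNorm_nonneg' _) (Real.exp_pos _).le

lemma zw13_nonneg (B : ℕ → Word E → Op Λ) (μ : ℝ) (σ : ℕ → Word E) (k : ℕ) :
    0 ≤ zw13 B μ σ k := by
  refine mul_nonneg (pow_nonneg (by positivity) _) (Finset.prod_nonneg fun i _ => ?_)
  exact bb_nonneg B μ i (σ i)

lemma wordNorm_nonneg (μ : ℝ) (O : Word E → Op Λ) : 0 ≤ wordNorm μ O :=
  Real.iSup_nonneg fun α => Finset.sum_nonneg fun w _ => by
    split_ifs
    · exact mul_nonneg (opNorm_nonneg' _) (Real.exp_pos _).le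
    · exact le_refl 0

lemma sum_le_wordNorm (μ : ℝ) (O : Word E → Op Λ) (β : E) :
    (∑ w : Word E, if β ∈ w.S then opNorm (O w) * Real.exp (μ * (w.S.card : ℝ)) else 0)
      ≤ wordNorm μ O := by
  rw [wordNorm]
  exact le_ciSup (f := fun β : E => ∑ w : Word E,
      if β ∈ w.S then opNorm (O w) * Real.exp (μ * (w.S.card : ℝ)) else 0)
    (Set.Finite.bddAbove (Set.finite_range _)) β

lemma z13_nonneg (B : ℕ → Word E → Op Λ) (μ : ℝ) (k : ℕ) : 0 ≤ z13 B μ k :=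
  Real.iSup_nonneg fun α => Finset.sum_nonneg fun σ _ => by
    split_ifs
    · exact zw13_nonneg B μ _ k
    · exact le_refl 0

lemma sum_le_z13 (B : ℕ → Word E → Op Λ) (μ : ℝ) (m : ℕ) (β : E) :
    (∑ τ : Fin (m + 1) → Word E,
      if goodSeq (extend τ) m ∧ β ∈ (sprime (extend τ) m).S
        then zw13 B μ (extend τ) m else 0) ≤ z13 B μ m := by
  rw [z13]
  exact le_ciSup (f := fun β : E => ∑ τ : Fin (m + 1) → Word E,
      if goodSeq (extend τ) m ∧ β ∈ (sprime (extend τ) m).S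
        then zw13 B μ (extend τ) m else 0)
    (Set.Finite.bddAbove (Set.finite_range _)) β

lemma sum_snoc_split {k : ℕ} (f : (Fin (k + 2) → Word E) → ℝ) :
    (∑ σ : Fin (k + 2) → Word E, f σ)
      = ∑ w : Word E, ∑ τ : Fin (k + 1) → Word E, f (Fin.snoc τ w) := by
  rw [show (∑ σ : Fin (k + 2) → Word E, f σ)
      = ∑ p : Word E × (Fin (k + 1) → Word E), f (Fin.snoc p.2 p.1) from
    (Fintype.sum_equiv (Fin.snocEquiv (fun _ => Word E))
      (fun p => f (Fin.snoc p.2 p.1)) f fun p => rfl).symm,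
    Fintype.sum_prod_type]

lemma sum_le_z13kj (B : ℕ → Word E → Op Λ) (μ : ℝ) (k j : ℕ) (β : E) :
    (∑ σ : Fin (k + 1) → Word E,
      if goodSeq (extend σ) k ∧ β ∈ (extend σ j).S
        then zw13 B μ (extend σ) k else 0) ≤ z13kj B μ k j := by
  rw [z13kj]
  exact le_ciSup (f := fun β : E => ∑ σ : Fin (k + 1) → Word E,
      if goodSeq (extend σ) k ∧ β ∈ (extend σ j).S
        then zw13 B μ (extend σ) k else 0)
    (Set.Finite.bddAbove (Set.finite_range _)) β

lemma z13kj_nonneg (B : ℕ → Word E → Op Λ) (μ : ℝ) (k j : ℕ) : 0 ≤ z13kj B μ k j :=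
  Real.iSup_nonneg fun α => Finset.sum_nonneg fun σ _ => by
    split_ifs
    · exact zw13_nonneg B μ _ k
    · exact le_refl 0

lemma base00 (B : ℕ → Word E → Op Λ) (μ : ℝ) (α : E) :
    (∑ σ : Fin 1 → Word E,
      if goodSeq (extend σ) 0 ∧ α ∈ (extend σ 0).S then zw13 B μ (extend σ) 0 else 0)
    ≤ wordNorm μ (B 0) := by
  have key : ∀ σ : Fin 1 → Word E,
      (if goodSeq (extend σ) 0 ∧ α ∈ (extend σ 0).S then zw13 B μ (extend σ) 0 else 0)
      ≤ (if α ∈ (extend σ 0).S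
          then opNorm (B 0 (extend σ 0)) * Real.exp (μ * (((extend σ 0).S.card : ℕ) : ℝ))
          else 0) := by
    intro σ
    by_cases hc : goodSeq (extend σ) 0 ∧ α ∈ (extend σ 0).S
    · rw [if_pos hc, if_pos hc.2]
      have hcard : (1 : ℝ) ≤ ((extend σ 0).S.card : ℝ) := by
        exact_mod_cast Finset.card_pos.2 ⟨α, hc.2⟩
      have hsp : sprime (extend σ) 0 = extend σ 0 := rfl
      rw [zw13, hsp, Finset.prod_range_one, pow_one]
      nth_rewrite 2 [← one_mul (opNorm (B 0 (extend σ 0)) * _)]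
      apply mul_le_mul_of_nonneg_right _ (bb_nonneg B μ 0 _)
      rw [div_le_one (by linarith)]
      linarith
    · rw [if_neg hc]
      split_ifs
      · exact bb_nonneg B μ 0 _
      · exact le_refl 0
  calc (∑ σ : Fin 1 → Word E,
        if goodSeq (extend σ) 0 ∧ α ∈ (extend σ 0).S then zw13 B μ (extend σ) 0 else 0)
      ≤ ∑ σ : Fin 1 → Word E, (if α ∈ (extend σ 0).S
          then opNorm (B 0 (extend σ 0)) * Real.exp (μ * (((extend σ 0).S.card : ℕ) : ℝ))
          else 0) := Finset.sum_le_sum fun σ _ => key σ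
    _ = ∑ w : Word E, (if α ∈ w.S
          then opNorm (B 0 w) * Real.exp (μ * ((w.S.card : ℕ) : ℝ)) else 0) := by
        refine Fintype.sum_equiv (Equiv.funUnique (Fin 1) (Word E)) _ _ fun σ => ?_
        rw [extend_lt σ 0 Nat.one_pos]
        rfl
    _ ≤ wordNorm μ (B 0) := sum_le_wordNorm μ (B 0) α

lemma ite_sum_swap {c : Prop} [Decidable c] {ι : Type} [Fintype ι] (f : ι → ℝ) :
    (∑ x : ι, if c then f x else 0) = if c then ∑ x : ι, f x else 0 := by
  split_ifs <;> simp

lemma base_succ (B : ℕ → Word E → Op Λ) (μ : ℝ) (m : ℕ) (α : E) :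
    (∑ σ : Fin (m + 2) → Word E,
      if goodSeq (extend σ) (m + 1) ∧ α ∈ (extend σ (m + 1)).S
        then zw13 B μ (extend σ) (m + 1) else 0)
    ≤ z13 B μ m * wordNorm μ (B (m + 1)) := by
  have Hnn : ∀ (τ : Fin (m + 1) → Word E) (β : E),
      0 ≤ (if goodSeq (extend τ) m ∧ β ∈ (sprime (extend τ) m).S
            then zw13 B μ (extend τ) m else 0) := by
    intro τ β; split_ifs
    · exact zw13_nonneg B μ _ m
    · exact le_refl 0
  rw [sum_snoc_split]
  have key : ∀ (w : Word E) (τ : Fin (m + 1) → Word E),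
      (if goodSeq (extend (Fin.snoc τ w)) (m + 1) ∧ α ∈ (extend (Fin.snoc τ w) (m + 1)).S
        then zw13 B μ (extend (Fin.snoc τ w)) (m + 1) else 0)
      ≤ (if α ∈ w.S
          then (1 / (w.S.card : ℝ)) * (opNorm (B (m + 1) w) * Real.exp (μ * (w.S.card : ℝ))) *
            ∑ β ∈ w.S, (if goodSeq (extend τ) m ∧ β ∈ (sprime (extend τ) m).S
              then zw13 B μ (extend τ) m else 0)
          else 0) := by
    intro w τ
    by_cases hc : goodSeq (extend (Fin.snoc τ w)) (m + 1) ∧ α ∈ (extend (Fin.snoc τ w) (m + 1)).S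
    · obtain ⟨hg, hα'⟩ := hc
      have hα : α ∈ w.S := by rwa [extend_snoc_last] at hα'
      rw [if_pos ⟨hg, hα'⟩, if_pos hα]
      rw [goodSeq_snoc_iff] at hg
      obtain ⟨hgτ, hmd, hne⟩ := hg
      obtain ⟨β₀, hβ₀⟩ := hne
      rw [Finset.mem_inter] at hβ₀
      have hsp : sprime (extend (Fin.snoc τ w)) (m + 1) = wmul w (sprime (extend τ) m) := by
        show wmul (extend (Fin.snoc τ w) (m + 1)) (sprime (extend (Fin.snoc τ w)) m) = _
        rw [extend_snoc_last, sprime_extend_snoc τ w le_rfl]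
      have hS : (sprime (extend (Fin.snoc τ w)) (m + 1)).S = w.S ∪ (sprime (extend τ) m).S := by
        rw [hsp, wmul_S w _ hmd]
      have hwpos : (0 : ℝ) < (w.S.card : ℝ) := by
        exact_mod_cast Finset.card_pos.2 ⟨α, hα⟩
      have hSmpos : (0 : ℝ) < ((sprime (extend τ) m).S.card : ℝ) := by
        exact_mod_cast Finset.card_pos.2 ⟨β₀, hβ₀.2⟩
      have hcw : (w.S.card : ℝ) ≤ ((sprime (extend (Fin.snoc τ w)) (m + 1)).S.card : ℝ) := by
        exact_mod_cast Finset.card_le_card (by rw [hS]; exact Finset.subset_union_left)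
      have hcs : ((sprime (extend τ) m).S.card : ℝ)
          ≤ ((sprime (extend (Fin.snoc τ w)) (m + 1)).S.card : ℝ) := by
        exact_mod_cast Finset.card_le_card (by rw [hS]; exact Finset.subset_union_right)
      have h1 : (1 / ((sprime (extend (Fin.snoc τ w)) (m + 1)).S.card : ℝ))
          ≤ 1 / (w.S.card : ℝ) := one_div_le_one_div_of_le hwpos hcw
      have h2 : (1 / ((sprime (extend (Fin.snoc τ w)) (m + 1)).S.card : ℝ))
          ≤ 1 / ((sprime (extend τ) m).S.card : ℝ) := one_div_le_one_div_of_le hSmpos hcs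
      have hcnn : (0 : ℝ) ≤ 1 / ((sprime (extend (Fin.snoc τ w)) (m + 1)).S.card : ℝ) := by
        positivity
      have hfac : (∏ i ∈ Finset.range (m + 1),
          (opNorm (B i (extend (Fin.snoc τ w) i)) *
            Real.exp (μ * (((extend (Fin.snoc τ w) i).S.card : ℕ) : ℝ))))
          = ∏ i ∈ Finset.range (m + 1),
            (opNorm (B i (extend τ i)) * Real.exp (μ * (((extend τ i).S.card : ℕ) : ℝ))) :=
        Finset.prod_congr rfl fun i hi => by
          rw [extend_snoc_lt τ w i (Finset.mem_range.1 hi)]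
      have hPnn : 0 ≤ ∏ i ∈ Finset.range (m + 1),
          (opNorm (B i (extend τ i)) * Real.exp (μ * (((extend τ i).S.card : ℕ) : ℝ))) :=
        Finset.prod_nonneg fun i _ => bb_nonneg B μ i _
      have hbwnn : 0 ≤ opNorm (B (m + 1) w) * Real.exp (μ * (w.S.card : ℝ)) :=
        bb_nonneg B μ (m + 1) w
      have hHsum : zw13 B μ (extend τ) m ≤
          ∑ β ∈ w.S, (if goodSeq (extend τ) m ∧ β ∈ (sprime (extend τ) m).S
            then zw13 B μ (extend τ) m else 0) := by
        calc zw13 B μ (extend τ) m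
            = (if goodSeq (extend τ) m ∧ β₀ ∈ (sprime (extend τ) m).S
                then zw13 B μ (extend τ) m else 0) := (if_pos ⟨hgτ, hβ₀.2⟩).symm
          _ ≤ _ := Finset.single_le_sum (fun β _ => Hnn τ β) hβ₀.1
      calc zw13 B μ (extend (Fin.snoc τ w)) (m + 1)
          = (1 / ((sprime (extend (Fin.snoc τ w)) (m + 1)).S.card : ℝ)) ^ (m + 2) *
            ((∏ i ∈ Finset.range (m + 1),
              (opNorm (B i (extend τ i)) * Real.exp (μ * (((extend τ i).S.card : ℕ) : ℝ)))) *
             (opNorm (B (m + 1) w) * Real.exp (μ * (w.S.card : ℝ)))) := by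
            rw [zw13, Finset.prod_range_succ, hfac, extend_snoc_last]
        _ ≤ ((1 / (w.S.card : ℝ)) * (1 / ((sprime (extend τ) m).S.card : ℝ)) ^ (m + 1)) *
            ((∏ i ∈ Finset.range (m + 1),
              (opNorm (B i (extend τ i)) * Real.exp (μ * (((extend τ i).S.card : ℕ) : ℝ)))) *
             (opNorm (B (m + 1) w) * Real.exp (μ * (w.S.card : ℝ)))) := by
            apply mul_le_mul_of_nonneg_right _ (mul_nonneg hPnn hbwnn)
            rw [pow_succ']
            exact mul_le_mul h1 (pow_le_pow_left₀ hcnn h2 (m + 1)) (pow_nonneg hcnn _)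
              (by positivity)
        _ = (1 / (w.S.card : ℝ)) * (opNorm (B (m + 1) w) * Real.exp (μ * (w.S.card : ℝ))) *
            zw13 B μ (extend τ) m := by
            rw [zw13]; ring
        _ ≤ (1 / (w.S.card : ℝ)) * (opNorm (B (m + 1) w) * Real.exp (μ * (w.S.card : ℝ))) *
            ∑ β ∈ w.S, (if goodSeq (extend τ) m ∧ β ∈ (sprime (extend τ) m).S
              then zw13 B μ (extend τ) m else 0) :=
            mul_le_mul_of_nonneg_left hHsum
              (mul_nonneg (by positivity) hbwnn)
    · rw [if_neg hc]
      split_ifs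
      · refine mul_nonneg (mul_nonneg (by positivity) (bb_nonneg B μ (m + 1) w)) ?_
        exact Finset.sum_nonneg fun β _ => Hnn τ β
      · exact le_refl 0
  calc (∑ w : Word E, ∑ τ : Fin (m + 1) → Word E,
        if goodSeq (extend (Fin.snoc τ w)) (m + 1) ∧ α ∈ (extend (Fin.snoc τ w) (m + 1)).S
          then zw13 B μ (extend (Fin.snoc τ w)) (m + 1) else 0)
      ≤ ∑ w : Word E, ∑ τ : Fin (m + 1) → Word E,
        (if α ∈ w.S
          then (1 / (w.S.card : ℝ)) * (opNorm (B (m + 1) w) * Real.exp (μ * (w.S.card : ℝ))) *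
            ∑ β ∈ w.S, (if goodSeq (extend τ) m ∧ β ∈ (sprime (extend τ) m).S
              then zw13 B μ (extend τ) m else 0)
          else 0) :=
        Finset.sum_le_sum fun w _ => Finset.sum_le_sum fun τ _ => key w τ
    _ ≤ ∑ w : Word E, (if α ∈ w.S
          then opNorm (B (m + 1) w) * Real.exp (μ * (w.S.card : ℝ)) else 0) * z13 B μ m := by
        refine Finset.sum_le_sum fun w _ => ?_
        rw [ite_sum_swap]
        split_ifs with hw
        · have hwpos : (0 : ℝ) < (w.S.card : ℝ) := by
            exact_mod_cast Finset.card_pos.2 ⟨α, hw⟩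
          rw [← Finset.mul_sum, Finset.sum_comm]
          have hsum : (∑ β ∈ w.S, ∑ τ : Fin (m + 1) → Word E,
              (if goodSeq (extend τ) m ∧ β ∈ (sprime (extend τ) m).S
                then zw13 B μ (extend τ) m else 0)) ≤ (w.S.card : ℝ) * z13 B μ m := by
            have h := Finset.sum_le_card_nsmul w.S
              (fun β => ∑ τ : Fin (m + 1) → Word E,
                (if goodSeq (extend τ) m ∧ β ∈ (sprime (extend τ) m).S
                  then zw13 B μ (extend τ) m else 0))
              (z13 B μ m) (fun β _ => sum_le_z13 B μ m β)
            rwa [nsmul_eq_mul] at h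
          calc (1 / (w.S.card : ℝ)) * (opNorm (B (m + 1) w) * Real.exp (μ * (w.S.card : ℝ))) *
                (∑ β ∈ w.S, ∑ τ : Fin (m + 1) → Word E,
                  (if goodSeq (extend τ) m ∧ β ∈ (sprime (extend τ) m).S
                    then zw13 B μ (extend τ) m else 0))
              ≤ (1 / (w.S.card : ℝ)) * (opNorm (B (m + 1) w) * Real.exp (μ * (w.S.card : ℝ))) *
                ((w.S.card : ℝ) * z13 B μ m) :=
              mul_le_mul_of_nonneg_left hsum
                (mul_nonneg (by positivity) (bb_nonneg B μ (m + 1) w))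
            _ = ((w.S.card : ℝ) / (w.S.card : ℝ)) *
                ((opNorm (B (m + 1) w) * Real.exp (μ * (w.S.card : ℝ))) * z13 B μ m) := by
                ring
            _ = (opNorm (B (m + 1) w) * Real.exp (μ * (w.S.card : ℝ))) * z13 B μ m := by
                rw [div_self (ne_of_gt hwpos), one_mul]
        · simp
    _ ≤ wordNorm μ (B (m + 1)) * z13 B μ m := by
        rw [← Finset.sum_mul]
        exact mul_le_mul_of_nonneg_right (sum_le_wordNorm μ (B (m + 1)) α) (z13_nonneg B μ m)
    _ = z13 B μ m * wordNorm μ (B (m + 1)) := mul_comm _ _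

lemma step13 (B : ℕ → Word E → Op Λ) (μ : ℝ) (k j : ℕ) (hj : j ≤ k) (α : E) :
    (∑ σ : Fin (k + 2) → Word E,
      if goodSeq (extend σ) (k + 1) ∧ α ∈ (extend σ j).S
        then zw13 B μ (extend σ) (k + 1) else 0)
    ≤ (∑ σ : Fin (k + 1) → Word E,
        if goodSeq (extend σ) k ∧ α ∈ (extend σ j).S
          then zw13 B μ (extend σ) k else 0) * wordNorm μ (B (k + 1)) := by
  rw [sum_snoc_split]
  have key : ∀ (w : Word E) (τ : Fin (k + 1) → Word E),
      (if goodSeq (extend (Fin.snoc τ w)) (k + 1) ∧ α ∈ (extend (Fin.snoc τ w) j).S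
        then zw13 B μ (extend (Fin.snoc τ w)) (k + 1) else 0)
      ≤ (if goodSeq (extend τ) k ∧ α ∈ (extend τ j).S
          then zw13 B μ (extend τ) k *
            ((1 / ((sprime (extend τ) k).S.card : ℝ)) *
              ∑ β ∈ (sprime (extend τ) k).S,
                (if β ∈ w.S
                  then opNorm (B (k + 1) w) * Real.exp (μ * (w.S.card : ℝ)) else 0))
          else 0) := by
    intro w τ
    have hInn : 0 ≤ (1 / ((sprime (extend τ) k).S.card : ℝ)) *
        ∑ β ∈ (sprime (extend τ) k).S,
          (if β ∈ w.S
            then opNorm (B (k + 1) w) * Real.exp (μ * (w.S.card : ℝ)) else 0) := by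
      refine mul_nonneg (by positivity) (Finset.sum_nonneg fun β _ => ?_)
      split_ifs
      · exact bb_nonneg B μ (k + 1) w
      · exact le_refl 0
    by_cases hc : goodSeq (extend (Fin.snoc τ w)) (k + 1) ∧ α ∈ (extend (Fin.snoc τ w) j).S
    · obtain ⟨hg, hα'⟩ := hc
      have hα : α ∈ (extend τ j).S := by
        rwa [extend_snoc_lt τ w j (Nat.lt_succ_of_le hj)] at hα'
      rw [if_pos ⟨hg, hα'⟩]
      rw [goodSeq_snoc_iff] at hg
      obtain ⟨hgτ, hmd, hne⟩ := hg
      rw [if_pos ⟨hgτ, hα⟩]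
      obtain ⟨β₀, hβ₀⟩ := hne
      rw [Finset.mem_inter] at hβ₀
      have hsp : sprime (extend (Fin.snoc τ w)) (k + 1) = wmul w (sprime (extend τ) k) := by
        show wmul (extend (Fin.snoc τ w) (k + 1)) (sprime (extend (Fin.snoc τ w)) k) = _
        rw [extend_snoc_last, sprime_extend_snoc τ w le_rfl]
      have hS : (sprime (extend (Fin.snoc τ w)) (k + 1)).S = w.S ∪ (sprime (extend τ) k).S := by
        rw [hsp, wmul_S w _ hmd]
      have hαS : α ∈ (sprime (extend τ) k).S := by
        rw [sprime_S _ k hgτ.1]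
        exact Finset.mem_biUnion.2 ⟨j, Finset.mem_range.2 (Nat.lt_succ_of_le hj), hα⟩
      have hSkpos : (0 : ℝ) < ((sprime (extend τ) k).S.card : ℝ) := by
        exact_mod_cast Finset.card_pos.2 ⟨α, hαS⟩
      have hcs : ((sprime (extend τ) k).S.card : ℝ)
          ≤ ((sprime (extend (Fin.snoc τ w)) (k + 1)).S.card : ℝ) := by
        exact_mod_cast Finset.card_le_card (by rw [hS]; exact Finset.subset_union_right)
      have h2 : (1 / ((sprime (extend (Fin.snoc τ w)) (k + 1)).S.card : ℝ))
          ≤ 1 / ((sprime (extend τ) k).S.card : ℝ) := one_div_le_one_div_of_le hSkpos hcs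
      have hcnn : (0 : ℝ) ≤ 1 / ((sprime (extend (Fin.snoc τ w)) (k + 1)).S.card : ℝ) := by
        positivity
      have hfac : (∏ i ∈ Finset.range (k + 1),
          (opNorm (B i (extend (Fin.snoc τ w) i)) *
            Real.exp (μ * (((extend (Fin.snoc τ w) i).S.card : ℕ) : ℝ))))
          = ∏ i ∈ Finset.range (k + 1),
            (opNorm (B i (extend τ i)) * Real.exp (μ * (((extend τ i).S.card : ℕ) : ℝ))) :=
        Finset.prod_congr rfl fun i hi => by
          rw [extend_snoc_lt τ w i (Finset.mem_range.1 hi)]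
      have hPnn : 0 ≤ ∏ i ∈ Finset.range (k + 1),
          (opNorm (B i (extend τ i)) * Real.exp (μ * (((extend τ i).S.card : ℕ) : ℝ))) :=
        Finset.prod_nonneg fun i _ => bb_nonneg B μ i _
      have hbwnn : 0 ≤ opNorm (B (k + 1) w) * Real.exp (μ * (w.S.card : ℝ)) :=
        bb_nonneg B μ (k + 1) w
      have hHsum : opNorm (B (k + 1) w) * Real.exp (μ * (w.S.card : ℝ)) ≤
          ∑ β ∈ (sprime (extend τ) k).S,
            (if β ∈ w.S
              then opNorm (B (k + 1) w) * Real.exp (μ * (w.S.card : ℝ)) else 0) := by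
        calc opNorm (B (k + 1) w) * Real.exp (μ * (w.S.card : ℝ))
            = (if β₀ ∈ w.S
                then opNorm (B (k + 1) w) * Real.exp (μ * (w.S.card : ℝ)) else 0) :=
              (if_pos hβ₀.1).symm
          _ ≤ _ := by
              have hnn2 : ∀ β ∈ (sprime (extend τ) k).S,
                  (0:ℝ) ≤ (if β ∈ w.S
                    then opNorm (B (k + 1) w) * Real.exp (μ * (w.S.card : ℝ)) else 0) := by
                intro β _
                split_ifs
                · exact hbwnn
                · exact le_refl 0
              exact Finset.single_le_sum hnn2 hβ₀.2
      calc zw13 B μ (extend (Fin.snoc τ w)) (k + 1)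
          = (1 / ((sprime (extend (Fin.snoc τ w)) (k + 1)).S.card : ℝ)) ^ (k + 2) *
            ((∏ i ∈ Finset.range (k + 1),
              (opNorm (B i (extend τ i)) * Real.exp (μ * (((extend τ i).S.card : ℕ) : ℝ)))) *
             (opNorm (B (k + 1) w) * Real.exp (μ * (w.S.card : ℝ)))) := by
            rw [zw13, Finset.prod_range_succ, hfac, extend_snoc_last]
        _ ≤ (1 / ((sprime (extend τ) k).S.card : ℝ)) ^ (k + 2) *
            ((∏ i ∈ Finset.range (k + 1),
              (opNorm (B i (extend τ i)) * Real.exp (μ * (((extend τ i).S.card : ℕ) : ℝ)))) *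
             (opNorm (B (k + 1) w) * Real.exp (μ * (w.S.card : ℝ)))) := by
            apply mul_le_mul_of_nonneg_right _ (mul_nonneg hPnn hbwnn)
            exact pow_le_pow_left₀ hcnn h2 (k + 2)
        _ = zw13 B μ (extend τ) k *
            ((1 / ((sprime (extend τ) k).S.card : ℝ)) *
              (opNorm (B (k + 1) w) * Real.exp (μ * (w.S.card : ℝ)))) := by
            rw [zw13]; ring
        _ ≤ zw13 B μ (extend τ) k *
            ((1 / ((sprime (extend τ) k).S.card : ℝ)) *
              ∑ β ∈ (sprime (extend τ) k).S,
                (if β ∈ w.S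
                  then opNorm (B (k + 1) w) * Real.exp (μ * (w.S.card : ℝ)) else 0)) := by
            refine mul_le_mul_of_nonneg_left ?_ (zw13_nonneg B μ _ k)
            exact mul_le_mul_of_nonneg_left hHsum (by positivity)
    · rw [if_neg hc]
      split_ifs
      · exact mul_nonneg (zw13_nonneg B μ _ k) hInn
      · exact le_refl 0
  calc (∑ w : Word E, ∑ τ : Fin (k + 1) → Word E,
        if goodSeq (extend (Fin.snoc τ w)) (k + 1) ∧ α ∈ (extend (Fin.snoc τ w) j).S
          then zw13 B μ (extend (Fin.snoc τ w)) (k + 1) else 0)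
      ≤ ∑ w : Word E, ∑ τ : Fin (k + 1) → Word E,
        (if goodSeq (extend τ) k ∧ α ∈ (extend τ j).S
          then zw13 B μ (extend τ) k *
            ((1 / ((sprime (extend τ) k).S.card : ℝ)) *
              ∑ β ∈ (sprime (extend τ) k).S,
                (if β ∈ w.S
                  then opNorm (B (k + 1) w) * Real.exp (μ * (w.S.card : ℝ)) else 0))
          else 0) :=
        Finset.sum_le_sum fun w _ => Finset.sum_le_sum fun τ _ => key w τ
    _ = ∑ τ : Fin (k + 1) → Word E, ∑ w : Word E,
        (if goodSeq (extend τ) k ∧ α ∈ (extend τ j).S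
          then zw13 B μ (extend τ) k *
            ((1 / ((sprime (extend τ) k).S.card : ℝ)) *
              ∑ β ∈ (sprime (extend τ) k).S,
                (if β ∈ w.S
                  then opNorm (B (k + 1) w) * Real.exp (μ * (w.S.card : ℝ)) else 0))
          else 0) := Finset.sum_comm
    _ ≤ ∑ τ : Fin (k + 1) → Word E,
        (if goodSeq (extend τ) k ∧ α ∈ (extend τ j).S
          then zw13 B μ (extend τ) k else 0) * wordNorm μ (B (k + 1)) := by
        refine Finset.sum_le_sum fun τ _ => ?_
        rw [ite_sum_swap]
        split_ifs with hτ
        · -- true branch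
          have hαS : α ∈ (sprime (extend τ) k).S := by
            rw [sprime_S _ k hτ.1.1]
            exact Finset.mem_biUnion.2 ⟨j, Finset.mem_range.2 (Nat.lt_succ_of_le hj), hτ.2⟩
          have hSkpos : (0 : ℝ) < ((sprime (extend τ) k).S.card : ℝ) := by
            exact_mod_cast Finset.card_pos.2 ⟨α, hαS⟩
          rw [← Finset.mul_sum, ← Finset.mul_sum, Finset.sum_comm]
          have hsum : (∑ β ∈ (sprime (extend τ) k).S, ∑ w : Word E,
              (if β ∈ w.S
                then opNorm (B (k + 1) w) * Real.exp (μ * (w.S.card : ℝ)) else 0))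
              ≤ ((sprime (extend τ) k).S.card : ℝ) * wordNorm μ (B (k + 1)) := by
            have h := Finset.sum_le_card_nsmul (sprime (extend τ) k).S
              (fun β => ∑ w : Word E,
                (if β ∈ w.S
                  then opNorm (B (k + 1) w) * Real.exp (μ * (w.S.card : ℝ)) else 0))
              (wordNorm μ (B (k + 1))) (fun β _ => sum_le_wordNorm μ (B (k + 1)) β)
            rwa [nsmul_eq_mul] at h
          calc zw13 B μ (extend τ) k *
                ((1 / ((sprime (extend τ) k).S.card : ℝ)) *
                  ∑ β ∈ (sprime (extend τ) k).S, ∑ w : Word E,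
                    (if β ∈ w.S
                      then opNorm (B (k + 1) w) * Real.exp (μ * (w.S.card : ℝ)) else 0))
              ≤ zw13 B μ (extend τ) k *
                ((1 / ((sprime (extend τ) k).S.card : ℝ)) *
                  (((sprime (extend τ) k).S.card : ℝ) * wordNorm μ (B (k + 1)))) := by
                refine mul_le_mul_of_nonneg_left ?_ (zw13_nonneg B μ _ k)
                exact mul_le_mul_of_nonneg_left hsum (by positivity)
            _ = (((sprime (extend τ) k).S.card : ℝ) / ((sprime (extend τ) k).S.card : ℝ)) *
                (zw13 B μ (extend τ) k * wordNorm μ (B (k + 1))) := by ring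
            _ = zw13 B μ (extend τ) k * wordNorm μ (B (k + 1)) := by
                rw [div_self (ne_of_gt hSkpos), one_mul]
        · simp
    _ = (∑ σ : Fin (k + 1) → Word E,
        if goodSeq (extend σ) k ∧ α ∈ (extend σ j).S
          then zw13 B μ (extend σ) k else 0) * wordNorm μ (B (k + 1)) := by
        rw [Finset.sum_mul]

/-- **Combinatorial lemma for the iterated-commutator expansion.**
For all `j = 0,…,k`: `z_{k,j} ≤ z(j−1) ∏_{t=j}^k ‖Bᵗ‖_μ`, where `z(−1) = 1`. -/
theorem commutator_combinatorial_bound (K : Checks Λ E) (B : ℕ → Word E → Op Λ)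
    (hB : ∀ t, IsColl K (B t)) (μ : ℝ) (hμ : 0 < μ) (k j : ℕ) (hj : j ≤ k) :
    z13kj B μ k j ≤
      (if j = 0 then 1 else z13 B μ (j - 1)) * ∏ t ∈ Finset.Icc j k, wordNorm μ (B t) := by
  induction k, hj using Nat.le_induction with
  | base =>
      cases j with
      | zero =>
          rw [if_pos rfl, one_mul, Finset.Icc_self, Finset.prod_singleton, z13kj]
          exact Real.iSup_le (fun α => base00 B μ α) (wordNorm_nonneg μ (B 0))
      | succ m =>
          rw [if_neg (Nat.succ_ne_zero m), Finset.Icc_self, Finset.prod_singleton,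
            Nat.succ_sub_one, z13kj]
          exact Real.iSup_le (fun α => base_succ B μ m α)
            (mul_nonneg (z13_nonneg B μ m) (wordNorm_nonneg μ (B (m + 1))))
  | succ k hk ih =>
      have h1 : z13kj B μ (k + 1) j ≤ z13kj B μ k j * wordNorm μ (B (k + 1)) := by
        rw [z13kj]
        refine Real.iSup_le (fun α => ?_)
          (mul_nonneg (z13kj_nonneg B μ k j) (wordNorm_nonneg μ (B (k + 1))))
        exact le_trans (step13 B μ k j hk α)
          (mul_le_mul_of_nonneg_right (sum_le_z13kj B μ k j α) (wordNorm_nonneg μ (B (k + 1))))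
      calc z13kj B μ (k + 1) j ≤ z13kj B μ k j * wordNorm μ (B (k + 1)) := h1
        _ ≤ ((if j = 0 then 1 else z13 B μ (j - 1)) *
              ∏ t ∈ Finset.Icc j k, wordNorm μ (B t)) * wordNorm μ (B (k + 1)) :=
            mul_le_mul_of_nonneg_right ih (wordNorm_nonneg μ (B (k + 1)))
        _ = (if j = 0 then 1 else z13 B μ (j - 1)) *
              ∏ t ∈ Finset.Icc j (k + 1), wordNorm μ (B t) := by
            rw [Finset.prod_Icc_succ_top (hk.trans (Nat.le_succ k)), mul_assoc]

end Stmt13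

end QLDPC
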